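/- arXiv:math/0103161 — 4 statements merged into one kernel-verified Lean document; each statement's English description precedes it below -/
import Mathlib

section
/- For every nonzero complex number c, the exponential of the 2×2 complex matrix [[0, c], [−conj(c), 0]] equals the matrix [[cos|c|, (c/|c|)·sin|c|], [−(conj(c)/|c|)·sin|c|, cos|c|]]. -/
set_option maxHeartbeats 1000000


open Complex Matrix

/-- For every nonzero complex number `c`, the exponential of the matrix
`[[0, c], [-conj c, 0]]` is `[[cos |c|, (c/|c|) sin |c|], [-(conj c/|c|) sin |c|, cos |c|]]`. -/
theorem exp_su2_matrix (c : ℂ) (hc : c ≠ 0) :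
    NormedSpace.exp (!![0, c; -(starRingEnd ℂ) c, 0] : Matrix (Fin 2) (Fin 2) ℂ) =
      !![(Real.cos (‖c‖) : ℂ), (c / (‖c‖ : ℂ)) * Real.sin (‖c‖);
         -((starRingEnd ℂ) c / (‖c‖ : ℂ)) * Real.sin (‖c‖),
         (Real.cos (‖c‖) : ℂ)] := by
  set r : ℂ := (‖c‖ : ℂ) with hr
  have hr0 : r ≠ 0 := by
    simp [hr, Complex.ofReal_eq_zero, norm_ne_zero_iff.mpr hc]
  have hI : (I : ℂ) ≠ 0 := I_ne_zero
  have hcc : (starRingEnd ℂ) c * c = r ^ 2 := by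
    rw [mul_comm, Complex.mul_conj']
  set P : Matrix (Fin 2) (Fin 2) ℂ := !![c, c; I * r, -(I * r)] with hP
  set Q : Matrix (Fin 2) (Fin 2) ℂ :=
    (-(2 * I * c * r))⁻¹ • !![-(I * r), -c; -(I * r), c] with hQ
  have hPQ : P * Q = 1 := by
    ext i j
    fin_cases i <;> fin_cases j <;>
      simp [hP, hQ, Matrix.mul_apply, Fin.sum_univ_two, Matrix.one_apply] <;>
      field_simp <;> ring_nf <;> linear_combination (-2) * Complex.I_sq
  have hQP : Q * P = 1 := by
    ext i j
    fin_cases i <;> fin_cases j <;>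
      simp [hP, hQ, Matrix.mul_apply, Fin.sum_univ_two, Matrix.one_apply, hcc] <;>
      field_simp <;> ring_nf <;> linear_combination (-2) * Complex.I_sq
  have hPinv : P⁻¹ = Q := Matrix.inv_eq_right_inv hPQ
  have hUnit : IsUnit P := (Matrix.isUnit_iff_isUnit_det P).2 (IsUnit.of_mul_eq_one Q.det (by rw [← Matrix.det_mul, hPQ, Matrix.det_one]))
  set D : Matrix (Fin 2) (Fin 2) ℂ := diagonal ![I * r, -(I * r)] with hD
  have hDmat : D = !![I * r, 0; 0, -(I * r)] := by
    ext i j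
    fin_cases i <;> fin_cases j <;> simp [hD]
  have hM : (!![0, c; -(starRingEnd ℂ) c, 0] : Matrix (Fin 2) (Fin 2) ℂ) = P * D * P⁻¹ := by
    rw [hPinv, hDmat]
    ext i j
    fin_cases i <;> fin_cases j <;>
      simp [hP, hQ, Matrix.mul_apply, Fin.sum_univ_two, hcc] <;>
      field_simp <;> ring_nf <;>
      grind [Complex.I_sq]
  rw [hM, Matrix.exp_conj P D hUnit, Matrix.exp_diagonal, hPinv]
  have hv : NormedSpace.exp (![I * r, -(I * r)] : Fin 2 → ℂ) =
      ![Complex.exp (I * r), Complex.exp (-(I * r))] := by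
    funext i
    rw [Pi.coe_exp, ← Complex.exp_eq_exp_ℂ]
    fin_cases i <;> rfl
  have hdiag : (diagonal ![Complex.exp (I * r), Complex.exp (-(I * r))] :
      Matrix (Fin 2) (Fin 2) ℂ) = !![Complex.exp (I * r), 0; 0, Complex.exp (-(I * r))] := by
    ext i j
    fin_cases i <;> fin_cases j <;> simp
  rw [hv, hdiag]
  have he1 : Complex.exp (I * r) = Complex.cos r + Complex.sin r * I := by
    rw [mul_comm, Complex.exp_mul_I]
  have he2 : Complex.exp (-(I * r)) = Complex.cos r - Complex.sin r * I := by
    rw [show -(I * r) = (-r) * I by ring, Complex.exp_mul_I, Complex.cos_neg, Complex.sin_neg]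
    ring
  have hcos : Complex.cos r = (Real.cos (‖c‖) : ℂ) := by
    rw [hr, Complex.ofReal_cos]
  have hsin : Complex.sin r = (Real.sin (‖c‖) : ℂ) := by
    rw [hr, Complex.ofReal_sin]
  ext i j
  fin_cases i <;> fin_cases j <;>
    simp [hP, hQ, Matrix.mul_apply, Fin.sum_univ_two, he1, he2,
      ← hcos, ← hsin, ← hr] <;>
    field_simp <;> ring_nf <;>
    simp [Complex.I_sq, inv_pow] <;> field_simp <;> ring_nf <;>
    grind
end

section
/- Let k be an integer and a : ℝ → ℝ a continuously differentiable function with a(0) = 0 and a(1) = kπ. Let (x₀, y₀) ∈ ℝ², and for t ∈ [0,1] set (x_t, y_t) = ψ_t(x₀,y₀) = (x₀ cos 2a(t) − y₀ sin 2a(t), x₀ sin 2a(t) + y₀ cos 2a(t)). Then the complex-valued integral ∫₀¹ ((−x_t + i y_t)/(x_t² + y_t² + 1)) · 2a'(t)·(−y_t + i x_t) dt equals −2kπi·(x₀² + y₀²)/(x₀² + y₀² + 1). -/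
open Real Complex intervalIntegral

/-- The integral of the 1-form `θ = ((-x+iy)/(x²+y²+1))(dx + i dy)` on the generating vector
field of the rotation isotopy of `ℂP¹`, along the orbit of `(x₀, y₀)`:
`∫₀¹ θ(X_t) dt = -2kπi (x₀² + y₀²)/(x₀² + y₀² + 1)`. -/
theorem integral_theta_along_isotopy (k : ℤ) (a : ℝ → ℝ)
    (ha : ContDiff ℝ 1 a) (ha0 : a 0 = 0) (ha1 : a 1 = k * π)
    (x₀ y₀ : ℝ)
    (x y : ℝ → ℝ)
    (hx : ∀ t, x t = x₀ * Real.cos (2 * a t) - y₀ * Real.sin (2 * a t))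
    (hy : ∀ t, y t = x₀ * Real.sin (2 * a t) + y₀ * Real.cos (2 * a t)) :
    ∫ t in (0 : ℝ)..1,
        (((-(x t) : ℝ) + Complex.I * (y t : ℝ)) / ((x t : ℝ) ^ 2 + (y t : ℝ) ^ 2 + 1)) *
          (2 * (deriv a t : ℝ)) * ((-(y t) : ℝ) + Complex.I * (x t : ℝ)) =
      -2 * (k : ℂ) * (π : ℂ) * Complex.I *
        ((x₀ : ℝ) ^ 2 + (y₀ : ℝ) ^ 2) / ((x₀ : ℝ) ^ 2 + (y₀ : ℝ) ^ 2 + 1) := by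
  set r2 : ℝ := x₀ ^ 2 + y₀ ^ 2 with hr2
  have hr2nn : 0 ≤ r2 := by positivity
  have hne : ((r2 : ℂ) + 1) ≠ 0 := by
    intro h
    have : (r2 : ℝ) + 1 = 0 := by exact_mod_cast h
    linarith
  have hxy : ∀ t, (x t) ^ 2 + (y t) ^ 2 = r2 := by
    intro t
    rw [hx, hy, hr2]
    nlinarith [Real.sin_sq_add_cos_sq (2 * a t)]
  have key : ∀ t,
      (((-(x t) : ℝ) + Complex.I * (y t : ℝ)) / ((x t : ℝ) ^ 2 + (y t : ℝ) ^ 2 + 1)) *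
          (2 * (deriv a t : ℝ)) * ((-(y t) : ℝ) + Complex.I * (x t : ℝ))
        = (-2 * Complex.I * (r2 : ℂ) / ((r2 : ℂ) + 1)) * ((deriv a t : ℝ) : ℂ) := by
    intro t
    have h1 : ((x t : ℂ)) ^ 2 + ((y t : ℂ)) ^ 2 = (r2 : ℂ) := by
      exact_mod_cast hxy t
    rw [show ((x t : ℂ)) ^ 2 + ((y t : ℂ)) ^ 2 + 1 = (r2 : ℂ) + 1 by rw [h1]]
    field_simp
    push_cast
    linear_combination (-1 : ℂ) * Complex.I * ((deriv a t : ℝ) : ℂ) * h1 +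
      ((x t : ℂ)) * ((y t : ℂ)) * ((deriv a t : ℝ) : ℂ) * Complex.I_sq
  simp_rw [key]
  rw [intervalIntegral.integral_const_mul]
  have hderiv : (∫ t in (0:ℝ)..1, ((deriv a t : ℝ) : ℂ)) = ((a 1 - a 0 : ℝ) : ℂ) := by
    rw [intervalIntegral.integral_ofReal]
    congr 1
    exact intervalIntegral.integral_deriv_eq_sub
      (fun t _ => (ha.differentiable one_ne_zero) t)
      ((ha.continuous_deriv le_rfl).continuousOn.intervalIntegrable)
  rw [hderiv, ha0, ha1]
  have h2 : ((r2 : ℝ) : ℂ) = (x₀ : ℂ) ^ 2 + (y₀ : ℂ) ^ 2 := by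
    rw [hr2]; push_cast; ring
  have hne' : ((x₀ : ℂ) ^ 2 + (y₀ : ℂ) ^ 2 + 1) ≠ 0 := by rw [← h2]; exact hne
  rw [h2]
  push_cast
  field_simp
  ring
end

section
/- Let k be an integer and a : ℝ → ℝ a continuously differentiable function with a(0) = 0 and a(1) = kπ. Let (x₀, y₀) ∈ ℝ², and for t ∈ [0,1] set (x_t, y_t) = ψ_t(x₀,y₀) = (x₀ cos 2a(t) − y₀ sin 2a(t), x₀ sin 2a(t) + y₀ cos 2a(t)). Then −(1/(2πi))·∫₀¹ ((−x_t + i y_t)/(x_t² + y_t² + 1))·2a'(t)·(−y_t + i x_t) dt − ∫₀¹ (a'(t)/(2π))·(x_t² + y_t² − 1)/(x_t² + y_t² + 1) dt = k/2. In particular, exp(2πi times this quantity) = e^{ikπ} = (−1)^k. -/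
open Real Complex intervalIntegral

/-- The action integral of the closed rotation isotopy of `ℂP¹` equals `k/2`, and hence the
invariant `κ(ψ) = exp(2πi 𝔄_ψ(q))` equals `e^{ikπ} = (-1)^k`. -/
theorem action_integral_eq (k : ℤ) (a : ℝ → ℝ)
    (ha : ContDiff ℝ 1 a) (ha0 : a 0 = 0) (ha1 : a 1 = k * π)
    (x₀ y₀ : ℝ)
    (x y : ℝ → ℝ)
    (hx : ∀ t, x t = x₀ * Real.cos (2 * a t) - y₀ * Real.sin (2 * a t))
    (hy : ∀ t, y t = x₀ * Real.sin (2 * a t) + y₀ * Real.cos (2 * a t)) :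
    -(1 / (2 * (π : ℂ) * Complex.I)) *
        (∫ t in (0 : ℝ)..1,
          (((-(x t) : ℝ) + Complex.I * (y t : ℝ)) / ((x t : ℝ) ^ 2 + (y t : ℝ) ^ 2 + 1)) *
            (2 * (deriv a t : ℝ)) * ((-(y t) : ℝ) + Complex.I * (x t : ℝ))) -
      ((∫ t in (0 : ℝ)..1,
          (deriv a t / (2 * π)) * ((x t ^ 2 + y t ^ 2 - 1) / (x t ^ 2 + y t ^ 2 + 1)) : ℝ) : ℂ) =
      (k : ℂ) / 2 ∧
    Complex.exp (2 * (π : ℂ) * Complex.I *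
        (-(1 / (2 * (π : ℂ) * Complex.I)) *
          (∫ t in (0 : ℝ)..1,
            (((-(x t) : ℝ) + Complex.I * (y t : ℝ)) / ((x t : ℝ) ^ 2 + (y t : ℝ) ^ 2 + 1)) *
              (2 * (deriv a t : ℝ)) * ((-(y t) : ℝ) + Complex.I * (x t : ℝ))) -
        ((∫ t in (0 : ℝ)..1,
            (deriv a t / (2 * π)) * ((x t ^ 2 + y t ^ 2 - 1) / (x t ^ 2 + y t ^ 2 + 1)) : ℝ) : ℂ))) =
      (-1 : ℂ) ^ k := by
  obtain ⟨R, hR⟩ : ∃ R : ℝ, R = x₀ ^ 2 + y₀ ^ 2 := ⟨_, rfl⟩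
  have hr : ∀ t, x t ^ 2 + y t ^ 2 = R := by
    intro t
    rw [hx t, hy t, hR]
    have h := Real.sin_sq_add_cos_sq (2 * a t)
    nlinarith [h]
  have hRpos : (0:ℝ) < R + 1 := by rw [hR]; positivity
  have hne : (R : ℂ) + 1 ≠ 0 := by
    have : ((R : ℂ) + 1) = ((R + 1 : ℝ) : ℂ) := by push_cast; ring
    rw [this]
    exact_mod_cast hRpos.ne'
  have hdc : Continuous (deriv a) := ha.continuous_deriv le_rfl
  have hInt : (∫ t in (0:ℝ)..1, deriv a t) = k * π := by
    rw [intervalIntegral.integral_deriv_eq_sub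
        (fun t _ => (ha.differentiable one_ne_zero).differentiableAt)
        (hdc.intervalIntegrable 0 1), ha1, ha0, sub_zero]
  have h2 : (∫ t in (0:ℝ)..1,
      (deriv a t / (2 * π)) * ((x t ^ 2 + y t ^ 2 - 1) / (x t ^ 2 + y t ^ 2 + 1)))
      = ((R - 1) / ((R + 1) * (2 * π))) * (k * π) := by
    rw [show (∫ t in (0:ℝ)..1,
        (deriv a t / (2 * π)) * ((x t ^ 2 + y t ^ 2 - 1) / (x t ^ 2 + y t ^ 2 + 1)))
        = ∫ t in (0:ℝ)..1, ((R - 1) / ((R + 1) * (2 * π))) * deriv a t from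
      intervalIntegral.integral_congr (fun t _ => by rw [hr t]; field_simp [Real.pi_ne_zero, hRpos.ne'])]
    rw [intervalIntegral.integral_const_mul, hInt]
  have h1 : (∫ t in (0 : ℝ)..1,
          (((-(x t) : ℝ) + Complex.I * (y t : ℝ)) / ((x t : ℝ) ^ 2 + (y t : ℝ) ^ 2 + 1)) *
            (2 * (deriv a t : ℝ)) * ((-(y t) : ℝ) + Complex.I * (x t : ℝ)))
      = (-Complex.I * R / (R + 1) * 2) * ((k * π : ℝ) : ℂ) := by
    rw [show (∫ t in (0 : ℝ)..1,
          (((-(x t) : ℝ) + Complex.I * (y t : ℝ)) / ((x t : ℝ) ^ 2 + (y t : ℝ) ^ 2 + 1)) *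
            (2 * (deriv a t : ℝ)) * ((-(y t) : ℝ) + Complex.I * (x t : ℝ)))
        = ∫ t in (0:ℝ)..1, (-Complex.I * R / (R + 1) * 2) * ((deriv a t : ℝ) : ℂ) from
      intervalIntegral.integral_congr (fun t _ => by
        have hrc : ((x t : ℂ)) ^ 2 + ((y t : ℂ)) ^ 2 = (R : ℂ) := by
          have := hr t; push_cast [← this]; ring
        rw [hrc]
        field_simp [hne]
        push_cast
        linear_combination (((deriv a t : ℝ) : ℂ) * (x t) * (y t)) * Complex.I_sq -
          (Complex.I * ((deriv a t : ℝ) : ℂ)) * hrc)]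
    rw [intervalIntegral.integral_const_mul]
    have : (∫ t in (0:ℝ)..1, ((deriv a t : ℝ) : ℂ)) = (((∫ t in (0:ℝ)..1, deriv a t) : ℝ) : ℂ) :=
      intervalIntegral.integral_ofReal
    rw [this, hInt]
  rw [h1, h2]
  have hπ : (π : ℂ) ≠ 0 := by exact_mod_cast Real.pi_ne_zero
  have key : -(1 / (2 * (π : ℂ) * Complex.I)) *
      ((-Complex.I * R / (R + 1) * 2) * ((k * π : ℝ) : ℂ)) -
      ((((R - 1) / ((R + 1) * (2 * π))) * (k * π) : ℝ) : ℂ) = (k : ℂ) / 2 := by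
    have t2 : (R - 1) / ((R + 1) * (2 * π)) * ((k : ℝ) * π) = (R - 1) * k / ((R + 1) * 2) := by
      field_simp
    rw [t2]
    push_cast
    have t1 : -(1 / (2 * (π : ℂ) * Complex.I)) *
        (-Complex.I * (R : ℂ) / ((R : ℂ) + 1) * 2 * ((k : ℂ) * (π : ℂ))) =
        (R : ℂ) * k / ((R : ℂ) + 1) := by
      field_simp
    rw [t1]
    field_simp
    ring
  refine ⟨key, ?_⟩
  rw [key]
  rw [show 2 * (π : ℂ) * Complex.I * ((k : ℂ) / 2) = k * (π * Complex.I) by ring,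
    Complex.exp_int_mul, Complex.exp_pi_mul_I]
end

section
/- Let K be an algebraically closed field of characteristic zero, L a finite-dimensional semisimple Lie algebra over K (with nondegenerate Killing form), and H a splitting Cartan subalgebra of L. Let η : L → K be a linear functional such that η(⁅C, B⁆) = 0 for every C ∈ H and every B ∈ L, and assume η(α^∨) ≠ 0 for every nonzero root α, where α^∨ denotes the coroot of α. Then the isotropy algebra g_η = {A ∈ L : η(⁅A, B⁆) = 0 for all B ∈ L} equals H. -/
open LieAlgebra LieModule

attribute [local instance 100] LieRing.ofAssociativeRing

private lemma exists_eq_of_pow_sub_smul_eq_zero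
    {K : Type*} [Field K] {M : Type*} [AddCommGroup M] [Module K M]
    (f : Module.End K M) {c : K} (hc : c ≠ 0) :
    ∀ (n : ℕ) (x : M), ((f - c • 1) ^ n) x = 0 → ∃ y, f y = x := by
  intro n
  induction n with
  | zero =>
    intro x hx
    simp only [pow_zero, Module.End.one_apply] at hx
    exact ⟨0, by simp [hx]⟩
  | succ n ih =>
    intro x hx
    have h1 : ((f - c • 1) ^ n) ((f - c • 1) x) = 0 := by
      rw [← Module.End.mul_apply, ← pow_succ]
      exact hx
    obtain ⟨y, hy⟩ := ih _ h1
    refine ⟨c⁻¹ • (x - y), ?_⟩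
    have hy' : f y = f x - c • x := by
      rw [hy]; simp [sub_smul]
    rw [map_smul, map_sub, hy']
    rw [sub_sub_cancel, smul_smul, inv_mul_cancel₀ hc, one_smul]

/-- Let `L` be a finite-dimensional semisimple Lie algebra (with nondegenerate Killing form)
over an algebraically closed field `K` of characteristic zero, and `H` a splitting Cartan
subalgebra.  If `η : L → K` is a linear functional with `η ⁅C, B⁆ = 0` for all `C ∈ H` and
`B ∈ L`, and `η` is regular in the sense that `η (α^∨) ≠ 0` for every nonzero root `α`, then
the isotropy algebra `g_η = {A : L | ∀ B, η ⁅A, B⁆ = 0}` equals `H`. -/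
theorem isotropy_algebra_eq_cartan
    (K : Type*) [Field K] [IsAlgClosed K] [CharZero K]
    (L : Type*) [LieRing L] [LieAlgebra K L] [Module.Finite K L]
    [LieAlgebra.IsKilling K L]
    (H : LieSubalgebra K L) [H.IsCartanSubalgebra] [LieModule.IsTriangularizable K H L]
    (η : Module.Dual K L)
    (hη : ∀ C ∈ H, ∀ B : L, η ⁅C, B⁆ = 0)
    (hreg : ∀ α : Weight K H L, α.IsNonZero → η (LieAlgebra.IsKilling.coroot α : L) ≠ 0) :
    ∀ A : L, (∀ B : L, η ⁅A, B⁆ = 0) ↔ A ∈ H := by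
  -- η vanishes on every root space for a nonzero functional χ
  have hvanish : ∀ (χ : H → K), χ ≠ 0 → ∀ x ∈ rootSpace H χ, η x = 0 := by
    intro χ hχ x hx
    obtain ⟨h, hh⟩ := Function.ne_iff.mp hχ
    rw [LieModule.mem_genWeightSpace] at hx
    obtain ⟨k, hk⟩ := hx h
    obtain ⟨y, hy⟩ := exists_eq_of_pow_sub_smul_eq_zero (toEnd K H L h) hh k x hk
    have hxy : x = ⁅(h : L), y⁆ := by
      rw [← hy]; rfl
    rw [hxy]
    exact hη h h.2 y
  intro A
  constructor
  · intro hA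
    have htop : (⨆ χ : H → K, (rootSpace H χ : Submodule K L)) = ⊤ :=
      LieSubmodule.iSup_toSubmodule_eq_top.mpr (iSup_genWeightSpace_eq_top K H L)
    have hmem : A ∈ ⨆ χ : H → K, (rootSpace H χ : Submodule K L) := by
      rw [htop]; trivial
    rw [Submodule.mem_iSup_iff_exists_finsupp] at hmem
    obtain ⟨f, hf, hsum⟩ := hmem
    -- each nonzero-weight component vanishes
    have hzero : ∀ χ : H → K, χ ≠ 0 → f χ = 0 := by
      intro χ hχ
      by_cases hbot : rootSpace H χ = ⊥
      · have := hf χ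
        rw [hbot] at this
        simpa using this
      · set W : Weight K H L := ⟨χ, hbot⟩ with hW
        have hWne : W.IsNonZero := hχ
        -- κ (f χ) y = 0 for all y in the (-χ)-root space
        have hker : ∀ y ∈ rootSpace H (-χ), killingForm K L (f χ) y = 0 := by
          intro y hy
          have hterm : ∀ β : H → K, β ≠ χ → η ⁅f β, y⁆ = 0 := by
            intro β hβ
            refine hvanish (β + -χ) (fun hcon => hβ ?_) _
              (mapsTo_toEnd_genWeightSpace_add_of_mem_rootSpace K L H L β (-χ) (hf β) hy)
            have := congrArg (· + χ) hcon
            simpa [add_assoc] using this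
          have key : η ⁅f χ, y⁆ = 0 := by
            have hAy : η ⁅A, y⁆ = 0 := hA y
            rw [← hsum, Finsupp.sum] at hAy
            rw [show ⁅∑ a ∈ f.support, f a, y⁆ = ∑ a ∈ f.support, ⁅f a, y⁆ from
              map_sum ((LieModule.toEnd K L L).toLinearMap.flip y) f f.support,
              map_sum] at hAy
            rw [Finset.sum_eq_single χ (fun β _ hβ => hterm β hβ)
              (fun hns => by rw [Finsupp.notMem_support_iff.mp hns]; simp)] at hAy
            exact hAy
          have hlie : ⁅f χ, y⁆ = killingForm K L (f χ) y •
              ((LieAlgebra.IsKilling.cartanEquivDual H).symm W : L) :=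
            LieAlgebra.IsKilling.lie_eq_killingForm_smul_of_mem_rootSpace_of_mem_rootSpace_neg
              (hf χ) hy
          rw [hlie, map_smul, smul_eq_mul] at key
          have hsymm : η ((LieAlgebra.IsKilling.cartanEquivDual H).symm W : L) ≠ 0 := by
            intro hcon
            apply hreg W hWne
            have h2 : (LieAlgebra.IsKilling.coroot W : L) =
                (2 : ℕ) • (W ((LieAlgebra.IsKilling.cartanEquivDual H).symm W))⁻¹ •
                  ((LieAlgebra.IsKilling.cartanEquivDual H).symm W : L) := rfl
            rw [h2, map_nsmul, map_smul, hcon]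
            simp
          exact (mul_eq_zero.mp key).resolve_right hsymm
        have hfm : f χ ∈ rootSpace H χ := hf χ
        have : f χ ∈ LinearMap.ker (killingForm K L) :=
          LieAlgebra.mem_ker_killingForm_of_mem_rootSpace_of_forall_rootSpace_neg
            (K := K) (L := L) (H := H) hfm hker
        rwa [LieAlgebra.IsKilling.ker_killingForm_eq_bot, Submodule.mem_bot] at this
    -- hence A lies in the zero root space, which is H
    have hA0 : A ∈ rootSpace H (0 : H → K) := by
      rw [← hsum, Finsupp.sum]
      refine sum_mem fun β _ => ?_
      by_cases hβ : β = 0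
      · rw [hβ] at *; exact hf 0
      · rw [hzero β hβ]; exact zero_mem _
    rwa [LieAlgebra.rootSpace_zero_eq, LieSubalgebra.mem_toLieSubmodule] at hA0
  · intro hA B
    exact hη A hA B
end
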